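/- Let d be odd, let A be a d×d complex Hermitian positive semidefinite matrix, and let B be a d×d complex Hermitian matrix with Bᵀ = −B (purely imaginary entries). If both A + B and A − B are positive semidefinite, then Tr(B²) ≤ Tr(A²) − λ_min(A)², where λ_min(A) is the smallest eigenvalue of A. -/

import Mathlib

open Matrix
open scoped ComplexOrder

private lemma psd_diag_entry {d : ℕ} {M : Matrix (Fin d) (Fin d) ℂ} (hM : M.PosSemidef)
    (i : Fin d) : 0 ≤ M i i := by
  have h := hM.dotProduct_mulVec_nonneg (Pi.single i 1)
  simpa [dotProduct, mulVec, Pi.single_apply, Finset.sum_ite_eq', mul_ite, ite_mul] using h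

private lemma conj_diag_const {n : Type*} [Fintype n] [DecidableEq n]
    (P Q : Matrix n n ℂ) (h : P * Q = 1) (c : ℂ) :
    P * diagonal (fun _ => c) * Q = diagonal (fun _ => c) := by
  rw [← smul_one_eq_diagonal, mul_smul_comm, mul_one, Matrix.smul_mul, h]

/-- Let `d` be odd, `A` Hermitian positive semidefinite and `B`
Hermitian with `Bᵀ = −B`. If `A + B` and `A − B` are positive semidefinite, then
`Tr(B²) ≤ Tr(A²) − λ_min(A)²`. -/
theorem trace_sq_le_sub_min_eigenvalue_sq (d : ℕ) (hd : Odd d)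
    (A B : Matrix (Fin d) (Fin d) ℂ)
    (hA : A.PosSemidef) (hB : B.IsHermitian) (hskew : B.transpose = -B)
    (hplus : (A + B).PosSemidef) (hminus : (A - B).PosSemidef) :
    (B * B).trace.re ≤ (A * A).trace.re - (⨅ i, hA.1.eigenvalues i) ^ 2 := by
  classical
  haveI : Nonempty (Fin d) := Fin.pos_iff_nonempty.mp hd.pos
  set μ : Fin d → ℝ := hB.eigenvalues with hμ
  set ν : Fin d → ℝ := hA.1.eigenvalues with hν
  set lm : ℝ := ⨅ i, ν i with hlm
  have hlm_le : ∀ i, lm ≤ ν i := fun i => ciInf_le (Set.Finite.bddBelow (Set.finite_range _)) i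
  have hlm0 : 0 ≤ lm := le_ciInf fun i => hA.eigenvalues_nonneg i
  -- det B = 0, so some eigenvalue of B is 0
  have hdetB : B.det = 0 := by
    have h1 : B.det = (-B).det := by rw [← hskew, det_transpose]
    rw [det_neg, Fintype.card_fin, Odd.neg_one_pow hd, neg_one_mul] at h1
    linear_combination h1 / 2
  obtain ⟨k, hk⟩ : ∃ k, μ k = 0 := by
    have h2 := hB.det_eq_prod_eigenvalues
    rw [hdetB] at h2
    obtain ⟨k, -, hk⟩ := Finset.prod_eq_zero_iff.mp h2.symm
    exact ⟨k, by simp only [hμ]; exact RCLike.ofReal_eq_zero.mp hk⟩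
  set U : Matrix (Fin d) (Fin d) ℂ := ↑hB.eigenvectorUnitary with hUdef
  have hU1 : star U * U = 1 := mem_unitaryGroup_iff'.mp hB.eigenvectorUnitary.2
  have hU2 : U * star U = 1 := mem_unitaryGroup_iff.mp hB.eigenvectorUnitary.2
  set D : Matrix (Fin d) (Fin d) ℂ := diagonal (fun i => (μ i : ℂ)) with hDdef
  have hBD : star U * B * U = D := by
    simpa [Function.comp_def] using hB.conjStarAlgAut_star_eigenvectorUnitary
  set A' : Matrix (Fin d) (Fin d) ℂ := star U * A * U with hA'def
  have hA'h : A'.IsHermitian := by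
    show A'ᴴ = A'
    rw [hA'def, star_eq_conjTranspose, conjTranspose_mul, conjTranspose_mul,
      conjTranspose_conjTranspose, hA.1.eq, mul_assoc]
  -- product collapse
  have hmul : ∀ M N : Matrix (Fin d) (Fin d) ℂ,
      (star U * M * U) * (star U * N * U) = star U * (M * N) * U := by
    intro M N
    calc (star U * M * U) * (star U * N * U)
        = star U * M * (U * star U) * (N * U) := by simp only [mul_assoc]
      _ = star U * (M * N) * U := by rw [hU2, mul_one]; simp only [mul_assoc]
  have hconjtr : ∀ M : Matrix (Fin d) (Fin d) ℂ, (star U * M * U).trace = M.trace := by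
    intro M
    rw [trace_mul_cycle, hU2, one_mul]
  -- transported PSD facts
  have hplus' : (A' + D).PosSemidef := by
    have h := hplus.conjTranspose_mul_mul_same U
    rw [← star_eq_conjTranspose] at h
    have he : star U * (A + B) * U = A' + D := by
      rw [mul_add, add_mul, hBD, hA'def]
    rwa [he] at h
  have hminus' : (A' - D).PosSemidef := by
    have h := hminus.conjTranspose_mul_mul_same U
    rw [← star_eq_conjTranspose] at h
    have he : star U * (A - B) * U = A' - D := by
      rw [mul_sub, sub_mul, hBD, hA'def]
    rwa [he] at h
  -- diagonal entry inequalities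
  have habs : ∀ i, -((A' i i).re) ≤ μ i ∧ μ i ≤ (A' i i).re := by
    intro i
    have h1 := psd_diag_entry hplus' i
    have h2 := psd_diag_entry hminus' i
    rw [Complex.le_def] at h1 h2
    simp only [Matrix.add_apply, Matrix.sub_apply, hDdef, diagonal_apply_eq, Complex.add_re, Complex.sub_re,
      Complex.ofReal_re, Complex.zero_re] at h1 h2
    constructor <;> linarith [h1.1, h2.1]
  -- trace of B^2
  have htrB : (B * B).trace = ((∑ i, μ i ^ 2 : ℝ) : ℂ) := by
    have hB' : star U * (B * B) * U = D * D := by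
      rw [← hmul, hBD]
    calc (B * B).trace = (star U * (B * B) * U).trace := (hconjtr _).symm
      _ = (D * D).trace := by rw [hB']
      _ = ∑ i, (μ i : ℂ) * (μ i : ℂ) := by
          rw [hDdef, diagonal_mul_diagonal, trace_diagonal]
      _ = ((∑ i, μ i ^ 2 : ℝ) : ℂ) := by push_cast; ring
  -- trace of A^2
  have htrA : (A * A).trace = (A' * A').trace := by
    rw [hmul, hconjtr]
  have h1 : ∀ i j : Fin d, A' i j * A' j i = (Complex.normSq (A' i j) : ℂ) := by
    intro i j
    have h' := congrFun (congrFun hA'h.eq j) i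
    rw [conjTranspose_apply] at h'
    rw [← h', Complex.star_def, Complex.mul_conj]
  have htrA'c : (A' * A').trace = ((∑ i, ∑ j, Complex.normSq (A' i j) : ℝ) : ℂ) := by
    calc (A' * A').trace = ∑ i, ∑ j, A' i j * A' j i := by
          simp [trace, mul_apply, diag]
      _ = ((∑ i, ∑ j, Complex.normSq (A' i j) : ℝ) : ℂ) := by
          simp only [h1]; push_cast; ring
  -- sum of squares of diagonal entries is bounded by the full square sum
  have hdiagsum : ∑ i, (A' i i).re ^ 2 ≤ ∑ i, ∑ j, Complex.normSq (A' i j) := by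
    apply Finset.sum_le_sum
    intro i _
    have h2 : (A' i i).re ^ 2 ≤ Complex.normSq (A' i i) := by
      rw [Complex.normSq_apply]
      nlinarith [sq_nonneg (A' i i).im]
    exact h2.trans (Finset.single_le_sum (fun j _ => Complex.normSq_nonneg _) (Finset.mem_univ i))
  -- A - lm • 1 is PSD
  have hAlm : (A - diagonal (fun _ => (lm : ℂ))).PosSemidef := by
    set V : Matrix (Fin d) (Fin d) ℂ := ↑hA.1.eigenvectorUnitary with hVdef
    have hV2 : V * star V = 1 := mem_unitaryGroup_iff.mp hA.1.eigenvectorUnitary.2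
    have hAspec : A = V * diagonal (fun i => (ν i : ℂ)) * star V := by
      simpa [Function.comp_def] using hA.1.spectral_theorem
    have hdiff : A - diagonal (fun _ => (lm : ℂ))
        = V * diagonal (fun i => ((ν i - lm : ℝ) : ℂ)) * star V := by
      calc A - diagonal (fun _ => (lm : ℂ))
          = V * diagonal (fun i => (ν i : ℂ)) * star V
            - V * diagonal (fun _ => (lm : ℂ)) * star V := by
            rw [← hAspec, conj_diag_const V (star V) hV2]
        _ = V * (diagonal (fun i => (ν i : ℂ)) - diagonal (fun _ => (lm : ℂ))) * star V := by
            rw [mul_sub, sub_mul]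
        _ = V * diagonal (fun i => ((ν i - lm : ℝ) : ℂ)) * star V := by
            rw [diagonal_sub]
            congr 2
            funext i
            push_cast
            simp
    rw [hdiff, star_eq_conjTranspose]
    refine PosSemidef.mul_mul_conjTranspose_same ?_ V
    refine Matrix.PosSemidef.diagonal ?_
    intro i
    exact Complex.zero_le_real.mpr (sub_nonneg.mpr (hlm_le i))
  -- hence lm ≤ A' k k
  have hA'k : lm ≤ (A' k k).re := by
    have h := hAlm.conjTranspose_mul_mul_same U
    rw [← star_eq_conjTranspose] at h
    have he : star U * (A - diagonal (fun _ => (lm : ℂ))) * U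
        = A' - diagonal (fun _ => (lm : ℂ)) := by
      rw [mul_sub, sub_mul, conj_diag_const (star U) U hU1, hA'def]
    rw [he] at h
    have h4 := psd_diag_entry h k
    rw [Complex.le_def] at h4
    simp only [Matrix.sub_apply, diagonal_apply_eq, Complex.sub_re, Complex.ofReal_re,
      Complex.zero_re] at h4
    linarith [h4.1]
  -- assemble
  have hsum : ∑ i, μ i ^ 2 = ∑ i ∈ Finset.univ.erase k, μ i ^ 2 := by
    rw [← Finset.add_sum_erase _ _ (Finset.mem_univ k), hk]
    ring
  have hsum2 : ∑ i ∈ Finset.univ.erase k, μ i ^ 2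
      ≤ ∑ i ∈ Finset.univ.erase k, (A' i i).re ^ 2 :=
    Finset.sum_le_sum fun i _ => sq_le_sq' (habs i).1 (habs i).2
  have hsum3 : (A' k k).re ^ 2 + ∑ i ∈ Finset.univ.erase k, (A' i i).re ^ 2
      = ∑ i, (A' i i).re ^ 2 :=
    Finset.add_sum_erase Finset.univ (fun i => (A' i i).re ^ 2) (Finset.mem_univ k)
  have hlk : lm ^ 2 ≤ (A' k k).re ^ 2 := pow_le_pow_left₀ hlm0 hA'k 2
  have hBre : (B * B).trace.re = ∑ i, μ i ^ 2 := by rw [htrB, Complex.ofReal_re]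
  have hAre : (A * A).trace.re = ∑ i, ∑ j, Complex.normSq (A' i j) := by
    rw [htrA, htrA'c, Complex.ofReal_re]
  linarith
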